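/- Adequacy of v-reduction: if M →_v* M', then M head-β_v-reduces to some value iff M' head-β_v-reduces to some value. Consequently, v-convertible terms are observationally equivalent in Plotkin's call-by-value λ-calculus: M =_v N implies that for every context C, C[M] head-β_v-reduces to a value iff C[N] does. -/

import Mathlib

/-- Terms of the call-by-value λ-calculus, in de Bruijn notation. -/
inductive Term : Type
  | var : ℕ → Term
  | lam : Term → Term
  | app : Term → Term → Term

namespace Term

/-- Values are variables and abstractions. -/
def isValue : Term → Prop
  | var _ => True
  | lam _ => True
  | app _ _ => False

/-- Shift free de Bruijn indices ≥ d by one. -/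
def lift (d : ℕ) : Term → Term
  | var n => if n < d then var n else var (n+1)
  | lam M => lam (lift (d+1) M)
  | app M N => app (lift d M) (lift d N)

/-- Capture-avoiding substitution of `V` for index `k`. -/
def subst : Term → ℕ → Term → Term
  | var n, k, V => if n = k then V else if k < n then var (n-1) else var n
  | lam M, k, V => lam (subst M (k+1) (lift 0 V))
  | app M N, k, V => app (subst M k V) (subst N k V)

/-- Apply a term to a list of arguments: `appList M [M₁,…,Mₘ] = M M₁ … Mₘ`. -/
def appList : Term → List Term → Term
  | M, [] => M
  | M, N :: Ns => appList (app M N) Ns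

/-- Root σ-reduction rules σ₁ and σ₃ (freshness handled by lifting). -/
inductive SigmaBase : Term → Term → Prop
  | sigma1 (M N L : Term) :
      SigmaBase (app (app (lam M) N) L) (app (lam (app M (lift 0 L))) N)
  | sigma3 (V L N : Term) : isValue V →
      SigmaBase (app V (app (lam L) N)) (app (lam (app (lift 0 V) L)) N)

/-- Root rules of v-reduction: β_v, σ₁ and σ₃. -/
inductive VBase : Term → Term → Prop
  | beta (M V : Term) : isValue V → VBase (app (lam M) V) (subst M 0 V)
  | sigma1 (M N L : Term) :
      VBase (app (app (lam M) N) L) (app (lam (app M (lift 0 L))) N)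
  | sigma3 (V L N : Term) : isValue V →
      VBase (app V (app (lam L) N)) (app (lam (app (lift 0 V) L)) N)

/-- Contextual closure of a root relation. -/
inductive Ctx (r : Term → Term → Prop) : Term → Term → Prop
  | base {M M'} : r M M' → Ctx r M M'
  | lam {M M'} : Ctx r M M' → Ctx r (lam M) (lam M')
  | appL {M M'} (N : Term) : Ctx r M M' → Ctx r (app M N) (app M' N)
  | appR (M : Term) {N N'} : Ctx r N N' → Ctx r (app M N) (app M N')

/-- σ-reduction: contextual closure of σ₁ ∪ σ₃. -/
def SigmaRed : Term → Term → Prop := Ctx SigmaBase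

/-- v-reduction: contextual closure of β_v ∪ σ₁ ∪ σ₃. -/
def Red : Term → Term → Prop := Ctx VBase

/-- Head β_v-reduction. -/
inductive HeadBeta : Term → Term → Prop
  | beta (M V : Term) (Ms : List Term) : isValue V →
      HeadBeta (appList (app (lam M) V) Ms) (appList (subst M 0 V) Ms)
  | right (V : Term) {N N'} (Ms : List Term) : isValue V → HeadBeta N N' →
      HeadBeta (appList (app V N) Ms) (appList (app V N') Ms)

/-- Head σ-reduction. -/
inductive HeadSigma : Term → Term → Prop
  | sigma1 (M N L : Term) (Ms : List Term) :
      HeadSigma (appList (app (app (lam M) N) L) Ms)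
                (appList (app (lam (app M (lift 0 L))) N) Ms)
  | sigma3 (V L N : Term) (Ms : List Term) : isValue V →
      HeadSigma (appList (app V (app (lam L) N)) Ms)
                (appList (app (lam (app (lift 0 V) L)) N) Ms)
  | right (V : Term) {N N'} (Ms : List Term) : isValue V → HeadSigma N N' →
      HeadSigma (appList (app V N) Ms) (appList (app V N') Ms)

/-- Head v-reduction: head β_v ∪ head σ. -/
def HeadRed (M N : Term) : Prop := HeadBeta M N ∨ HeadSigma M N

/-- Internal v-reduction: v-steps that are not head v-steps. -/
def IntRed (M N : Term) : Prop := Red M N ∧ ¬ HeadRed M N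

/-- Parallel reduction of the shuffling calculus λ_v^σ. -/
inductive Par : Term → Term → Prop
  | var (x : ℕ) {Ms Ms' : List Term} : List.Forall₂ Par Ms Ms' →
      Par (appList (var x) Ms) (appList (var x) Ms')
  | lam {M M'} {Ms Ms' : List Term} : Par M M' → List.Forall₂ Par Ms Ms' →
      Par (appList (lam M) Ms) (appList (lam M') Ms')
  | beta {M M' V V'} {Ms Ms' : List Term} : isValue V → isValue V' →
      Par M M' → Par V V' → List.Forall₂ Par Ms Ms' →
      Par (appList (app (lam M) V) Ms) (appList (subst M' 0 V') Ms')
  | sigma1 {M M' N N' L L'} {Ms Ms' : List Term} :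
      Par M M' → Par N N' → Par L L' → List.Forall₂ Par Ms Ms' →
      Par (appList (app (app (lam M) N) L) Ms)
          (appList (app (lam (app M' (lift 0 L'))) N') Ms')
  | sigma3 {V V' L L' N N'} {Ms Ms' : List Term} : isValue V → isValue V' →
      Par V V' → Par L L' → Par N N' → List.Forall₂ Par Ms Ms' →
      Par (appList (app V (app (lam L) N)) Ms)
          (appList (app (lam (app (lift 0 V') L')) N') Ms')

/-- Internal parallel reduction. -/
inductive IPar : Term → Term → Prop
  | lam {N N'} : Par N N' → IPar (lam N) (lam N')
  | var (x : ℕ) : IPar (var x) (var x)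
  | right {V V' N N'} {Ms Ms' : List Term} : isValue V → isValue V' →
      Par V V' → IPar N N' → List.Forall₂ Par Ms Ms' →
      IPar (appList (app V N) Ms) (appList (app V' N') Ms')

/-- One-hole contexts. -/
inductive Ctx1 : Type
  | hole : Ctx1
  | lam : Ctx1 → Ctx1
  | appL : Ctx1 → Term → Ctx1
  | appR : Term → Ctx1 → Ctx1

/-- Capture-allowing hole filling. -/
def fill : Ctx1 → Term → Term
  | .hole, M => M
  | .lam C, M => lam (fill C M)
  | .appL C N, M => app (fill C M) N
  | .appR N C, M => app N (fill C M)

/-- `M` halts: head β_v-reduction from `M` reaches a value. -/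
def Halts (M : Term) : Prop := ∃ V, isValue V ∧ Relation.ReflTransGen HeadBeta M V

end Term

namespace Term

/-! ### Basic infrastructure -/

@[simp] lemma isValue_var (n : ℕ) : isValue (var n) := trivial
@[simp] lemma isValue_lam (M : Term) : isValue (lam M) := trivial
@[simp] lemma not_isValue_app (M N : Term) : ¬ isValue (app M N) := fun h => h

def notApp : Term → Prop
  | app _ _ => False
  | _ => True

lemma notApp_of_isValue {V : Term} (h : isValue V) : notApp V := by
  cases V <;> trivial

@[simp] lemma appList_nil (M : Term) : appList M [] = M := rfl
@[simp] lemma appList_cons (M N : Term) (Ms : List Term) :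
    appList M (N :: Ms) = appList (app M N) Ms := rfl

lemma appList_append (M : Term) (as bs : List Term) :
    appList M (as ++ bs) = appList (appList M as) bs := by
  induction as generalizing M with
  | nil => rfl
  | cons a as ih => simp [ih]

def headOf : Term → Term
  | app M _ => headOf M
  | t => t

def argsOf : Term → List Term
  | app M N => argsOf M ++ [N]
  | _ => []

lemma headOf_appList (h : Term) (Ms : List Term) :
    headOf (appList h Ms) = headOf h := by
  induction Ms generalizing h with
  | nil => rfl
  | cons a as ih => simpa [headOf] using ih (app h a)

lemma argsOf_appList (h : Term) (Ms : List Term) :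
    argsOf (appList h Ms) = argsOf h ++ Ms := by
  induction Ms generalizing h with
  | nil => simp
  | cons a as ih => simp [ih (app h a), argsOf]

lemma headOf_eq_self {h : Term} (hh : notApp h) : headOf h = h := by
  cases h <;> first | rfl | exact absurd hh (by simp [notApp])

lemma argsOf_eq_nil {h : Term} (hh : notApp h) : argsOf h = [] := by
  cases h <;> first | rfl | exact absurd hh (by simp [notApp])

lemma appList_inj {h h' : Term} {as as' : List Term} (hh : notApp h) (hh' : notApp h')
    (e : appList h as = appList h' as') : h = h' ∧ as = as' := by
  have e1 := congrArg headOf e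
  have e2 := congrArg argsOf e
  rw [headOf_appList, headOf_appList, headOf_eq_self hh, headOf_eq_self hh'] at e1
  rw [argsOf_appList, argsOf_appList, argsOf_eq_nil hh, argsOf_eq_nil hh'] at e2
  simp at e2
  exact ⟨e1, e2⟩

lemma not_isValue_appList_app (A B : Term) (Ms : List Term) :
    ¬ isValue (appList (app A B) Ms) := by
  induction Ms generalizing A B with
  | nil => simp
  | cons a as ih => simpa using ih (app A B) a

def size : Term → ℕ
  | var _ => 1
  | lam M => size M + 1
  | app M N => size M + size N + 1

lemma size_appList (h : Term) (Ms : List Term) :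
    size (appList h Ms) = size h + (Ms.map size).sum + Ms.length := by
  induction Ms generalizing h with
  | nil => simp
  | cons a as ih => simp [ih (app h a), size]; omega

lemma size_pos (M : Term) : 0 < size M := by cases M <;> simp [size]

/-! ### lift / subst lemmas -/

lemma lift_lift (M : Term) : ∀ i j, i ≤ j →
    lift i (lift j M) = lift (j+1) (lift i M) := by
  induction M with
  | var n =>
    intro i j hij
    simp only [lift]
    split_ifs <;> simp only [lift] <;> split_ifs <;>
      first | rfl | (simp only [var.injEq]; omega) | omega
  | lam M ih => intro i j hij; simp [lift, ih (i+1) (j+1) (by omega)]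
  | app M N ihM ihN => intro i j hij; simp [lift, ihM i j hij, ihN i j hij]

lemma lift_subst_le (M : Term) : ∀ i k V, k ≤ i →
    lift i (subst M k V) = subst (lift (i+1) M) k (lift i V) := by
  induction M with
  | var n =>
    intro i k V h
    simp only [subst, lift]
    split_ifs <;> simp only [lift, subst] <;> split_ifs <;>
      first | rfl | (simp only [var.injEq]; omega) | omega
  | lam M ih =>
    intro i k V h
    simp [lift, subst, ih (i+1) (k+1) (lift 0 V) (by omega), lift_lift V 0 i (by omega)]
  | app M N ihM ihN => intro i k V h; simp [lift, subst, ihM i k V h, ihN i k V h]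

lemma lift_subst_ge (M : Term) : ∀ i k V, i ≤ k →
    lift i (subst M k V) = subst (lift i M) (k+1) (lift i V) := by
  induction M with
  | var n =>
    intro i k V h
    simp only [subst, lift]
    split_ifs <;> simp only [lift, subst] <;> split_ifs <;>
      first | rfl | (simp only [var.injEq]; omega) | omega
  | lam M ih =>
    intro i k V h
    simp [lift, subst, ih (i+1) (k+1) (lift 0 V) (by omega), lift_lift V 0 i (by omega)]
  | app M N ihM ihN => intro i k V h; simp [lift, subst, ihM i k V h, ihN i k V h]

lemma subst_lift (M : Term) : ∀ i V, subst (lift i M) i V = M := by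
  induction M with
  | var n =>
    intro i V
    simp only [lift]
    split_ifs <;> simp only [subst] <;> split_ifs <;>
      first | rfl | (simp only [var.injEq]; omega) | omega
  | lam M ih => intro i V; simp [lift, subst, ih (i+1)]
  | app M N ihM ihN => intro i V; simp [lift, subst, ihM, ihN]

lemma subst_subst (M : Term) : ∀ i k V W, i ≤ k →
    subst (subst M i V) k W = subst (subst M (k+1) (lift i W)) i (subst V k W) := by
  induction M with
  | var n =>
    intro i k V W h
    simp only [subst]
    split_ifs <;> (try simp only [subst]) <;> (try split_ifs) <;>
      first
        | rfl
        | (simp only [var.injEq]; omega)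
        | omega
        | (rw [subst_lift])
  | lam M ih =>
    intro i k V W h
    simp only [subst]
    rw [ih (i+1) (k+1) (lift 0 V) (lift 0 W) (by omega), lift_lift W 0 i (by omega),
      lift_subst_ge V 0 k W (by omega)]
  | app M N ihM ihN => intro i k V W h; simp [subst, ihM _ _ _ _ h, ihN _ _ _ _ h]

lemma isValue_lift {V : Term} (h : isValue V) (d : ℕ) : isValue (lift d V) := by
  cases V with
  | var n => simp only [lift]; split <;> simp
  | lam M => simp [lift]
  | app => simp at h

lemma isValue_subst {A V : Term} (hA : isValue A) (hV : isValue V) (k : ℕ) :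
    isValue (subst A k V) := by
  cases A with
  | var n =>
    simp only [subst]
    split_ifs <;> first | exact hV | simp
  | lam M => simp [subst]
  | app M N => simp at hA

lemma lift_appList (d : ℕ) (h : Term) (Ms : List Term) :
    lift d (appList h Ms) = appList (lift d h) (Ms.map (lift d)) := by
  induction Ms generalizing h with
  | nil => rfl
  | cons a as ih => simp [ih (app h a), lift]

lemma subst_appList (h : Term) (Ms : List Term) (k : ℕ) (V : Term) :
    subst (appList h Ms) k V = appList (subst h k V) (Ms.map (fun A => subst A k V)) := by
  induction Ms generalizing h with
  | nil => rfl
  | cons a as ih => simp [ih (app h a), subst]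

end Term
namespace Term

/-! ### Forall₂ helpers -/

lemma f2_append {R : Term → Term → Prop} :
    ∀ {l₁ l₂ u₁ u₂ : List Term}, List.Forall₂ R l₁ l₂ → List.Forall₂ R u₁ u₂ →
      List.Forall₂ R (l₁ ++ u₁) (l₂ ++ u₂) := by
  intro l₁ l₂ u₁ u₂ h₁ h₂
  induction h₁ with
  | nil => exact h₂
  | cons h _ ih => exact List.Forall₂.cons h ih

lemma f2_map {R S : Term → Term → Prop} {f g : Term → Term}
    (h : ∀ a b, R a b → S (f a) (g b)) :
    ∀ {l l' : List Term}, List.Forall₂ R l l' → List.Forall₂ S (l.map f) (l'.map g) := by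
  intro l l' hl
  induction hl with
  | nil => exact List.Forall₂.nil
  | cons h₀ _ ih => exact List.Forall₂.cons (h _ _ h₀) ih

lemma f2_imp {R S : Term → Term → Prop} (h : ∀ a b, R a b → S a b)
    {l l' : List Term} (hl : List.Forall₂ R l l') : List.Forall₂ S l l' := by
  induction hl with
  | nil => exact List.Forall₂.nil
  | cons h₀ _ ih => exact List.Forall₂.cons (h _ _ h₀) ih

/-! ### Par congruence helpers -/

lemma par_appList {P P' : Term} (h : Par P P') :
    ∀ {Ms Ms' : List Term}, List.Forall₂ Par Ms Ms' →
      Par (appList P Ms) (appList P' Ms') := by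
  intro Ms Ms' hl
  cases h with
  | var x h2 =>
    rw [← appList_append, ← appList_append]; exact Par.var x (f2_append h2 hl)
  | lam hM h2 =>
    rw [← appList_append, ← appList_append]; exact Par.lam hM (f2_append h2 hl)
  | beta hV hV' hM hVp h2 =>
    rw [← appList_append, ← appList_append]; exact Par.beta hV hV' hM hVp (f2_append h2 hl)
  | sigma1 hM hN hL h2 =>
    rw [← appList_append, ← appList_append]; exact Par.sigma1 hM hN hL (f2_append h2 hl)
  | sigma3 hV hV' hVp hL hN h2 =>
    rw [← appList_append, ← appList_append]; exact Par.sigma3 hV hV' hVp hL hN (f2_append h2 hl)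

lemma par_refl : ∀ M : Term, Par M M := by
  intro M
  induction M with
  | var n => exact Par.var n List.Forall₂.nil
  | lam M ih => exact Par.lam ih List.Forall₂.nil
  | app M N ihM ihN =>
    have : Par (appList M [N]) (appList M [N]) :=
      par_appList ihM (List.Forall₂.cons ihN List.Forall₂.nil)
    simpa using this

lemma f2_refl : ∀ Ms : List Term, List.Forall₂ Par Ms Ms := by
  intro Ms; induction Ms with
  | nil => exact List.Forall₂.nil
  | cons a as ih => exact List.Forall₂.cons (par_refl a) ih

lemma par_app {M M' N N' : Term} (hM : Par M M') (hN : Par N N') :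
    Par (app M N) (app M' N') := by
  have : Par (appList M [N]) (appList M' [N']) :=
    par_appList hM (List.Forall₂.cons hN List.Forall₂.nil)
  simpa using this

/-! ### Master inversion for Par -/

lemma par_cases {S T : Term} (hp : Par S T) {h : Term} {as : List Term}
    (hh : notApp h) (hS : S = appList h as) :
    (∃ x as', h = var x ∧ List.Forall₂ Par as as' ∧ T = appList (var x) as') ∨
    (∃ M M' as', h = lam M ∧ Par M M' ∧ List.Forall₂ Par as as' ∧ T = appList (lam M') as') ∨
    (∃ M M' V V' rest rest', h = lam M ∧ as = V :: rest ∧ isValue V ∧ isValue V' ∧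
      Par M M' ∧ Par V V' ∧ List.Forall₂ Par rest rest' ∧ T = appList (subst M' 0 V') rest') ∨
    (∃ M M' N N' L L' rest rest', h = lam M ∧ as = N :: L :: rest ∧
      Par M M' ∧ Par N N' ∧ Par L L' ∧ List.Forall₂ Par rest rest' ∧
      T = appList (app (lam (app M' (lift 0 L'))) N') rest') ∨
    (∃ V' L L' N N' rest rest', isValue h ∧ isValue V' ∧ Par h V' ∧
      as = (app (lam L) N) :: rest ∧ Par L L' ∧ Par N N' ∧ List.Forall₂ Par rest rest' ∧
      T = appList (app (lam (app (lift 0 V') L')) N') rest') := by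
  cases hp with
  | var x h2 =>
    obtain ⟨e1, e2⟩ := appList_inj (by trivial) hh hS
    subst e2
    exact Or.inl ⟨x, _, e1.symm, h2, rfl⟩
  | lam hM h2 =>
    obtain ⟨e1, e2⟩ := appList_inj (by trivial) hh hS
    subst e2
    exact Or.inr (Or.inl ⟨_, _, _, e1.symm, hM, h2, rfl⟩)
  | beta hV hV' hM hVp h2 =>
    rw [← appList_cons] at hS
    obtain ⟨e1, e2⟩ := appList_inj (by trivial) hh hS
    exact Or.inr (Or.inr (Or.inl ⟨_, _, _, _, _, _, e1.symm, e2.symm, hV, hV', hM, hVp, h2, rfl⟩))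
  | sigma1 hM hN hL h2 =>
    rw [← appList_cons, ← appList_cons] at hS
    obtain ⟨e1, e2⟩ := appList_inj (by trivial) hh hS
    exact Or.inr (Or.inr (Or.inr (Or.inl
      ⟨_, _, _, _, _, _, _, _, e1.symm, e2.symm, hM, hN, hL, h2, rfl⟩)))
  | sigma3 hV hV' hVp hL hN h2 =>
    rename_i V V' L L' N N' Ms Ms'
    rw [← appList_cons] at hS
    obtain ⟨e1, e2⟩ := appList_inj (notApp_of_isValue hV) hh hS
    subst e1
    exact Or.inr (Or.inr (Or.inr (Or.inr
      ⟨_, _, _, _, _, _, _, hV, hV', hVp, e2.symm, hL, hN, h2, rfl⟩)))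

lemma par_var_inv {x : ℕ} {T : Term} (hp : Par (var x) T) : T = var x := by
  have := par_cases hp (h := var x) (as := []) (by trivial) rfl
  rcases this with ⟨y, as', e, hl, hT⟩ | ⟨M, M', as', e, _, hl, hT⟩ |
    ⟨_,_,_,_,_,_,_,e,_⟩ | ⟨_,_,_,_,_,_,_,_,_,e,_⟩ | ⟨_,_,_,_,_,_,_,_,_,_,e,_⟩
  · cases hl; cases e; simpa using hT
  · exact absurd e (by simp)
  · exact absurd e (by simp)
  · exact absurd e (by simp)
  · exact absurd e (by simp)

lemma par_lam_inv {B : Term} {T : Term} (hp : Par (lam B) T) :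
    ∃ B', T = lam B' ∧ Par B B' := by
  have := par_cases hp (h := lam B) (as := []) (by trivial) rfl
  rcases this with ⟨y, as', e, hl, hT⟩ | ⟨M, M', as', e, hM, hl, hT⟩ |
    ⟨_,_,_,_,_,_,_,e,_⟩ | ⟨_,_,_,_,_,_,_,_,_,e,_⟩ | ⟨_,_,_,_,_,_,_,_,_,_,e,_⟩
  · exact absurd e (by simp)
  · cases hl; cases lam.inj e; exact ⟨M', by simpa using hT, hM⟩
  · exact absurd e (by simp)
  · exact absurd e (by simp)
  · exact absurd e (by simp)

lemma par_value {V T : Term} (hV : isValue V) (hp : Par V T) : isValue T := by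
  cases V with
  | var x => rw [par_var_inv hp]; trivial
  | lam B => obtain ⟨B', rfl, _⟩ := par_lam_inv hp; trivial
  | app => simp at hV

lemma par_value_ipar {V T : Term} (hV : isValue V) (hp : Par V T) : IPar V T := by
  cases V with
  | var x => rw [par_var_inv hp]; exact IPar.var x
  | lam B => obtain ⟨B', rfl, hB⟩ := par_lam_inv hp; exact IPar.lam hB
  | app => simp at hV

/-! ### IPar helpers -/

lemma ipar_to_par {P P' : Term} (h : IPar P P') : Par P P' := by
  induction h with
  | lam hN => exact Par.lam hN List.Forall₂.nil
  | var x => exact Par.var x List.Forall₂.nil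
  | right hV hV' hVp _ hMs ihN =>
    rename_i V V' N N' Ms Ms' _
    cases V with
    | var x =>
      rw [par_var_inv hVp]
      exact Par.var x (List.Forall₂.cons ihN hMs)
    | lam B =>
      obtain ⟨B', rfl, hB⟩ := par_lam_inv hVp
      exact Par.lam hB (List.Forall₂.cons ihN hMs)
    | app => simp at hV

lemma ipar_value_fwd {P P' : Term} (h : IPar P P') (hv : isValue P) : isValue P' := by
  cases h with
  | lam _ => trivial
  | var _ => trivial
  | right _ _ _ _ _ => exact absurd hv (not_isValue_appList_app _ _ _)

lemma ipar_value_rev {P P' : Term} (h : IPar P P') (hv : isValue P') : isValue P := by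
  cases h with
  | lam _ => trivial
  | var _ => trivial
  | right _ _ _ _ _ => exact absurd hv (not_isValue_appList_app _ _ _)

/-! ### Head reduction shape and lifting lemmas -/

lemma hb_src_not_value {X Y : Term} (h : HeadBeta X Y) : ¬ isValue X := by
  cases h with
  | beta M V Ms hV => exact not_isValue_appList_app _ _ _
  | right V Ms hV hN => exact not_isValue_appList_app _ _ _

lemma hs_tgt_not_value {X Y : Term} (h : HeadSigma X Y) : ¬ isValue Y := by
  cases h with
  | sigma1 M N L Ms => exact not_isValue_appList_app _ _ _
  | sigma3 V L N Ms hV => exact not_isValue_appList_app _ _ _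
  | right V Ms hV hN => exact not_isValue_appList_app _ _ _

lemma hb_appList {A B : Term} (h : HeadBeta A B) (Ms : List Term) :
    HeadBeta (appList A Ms) (appList B Ms) := by
  cases h with
  | beta M V Ms₀ hV =>
    rw [← appList_append, ← appList_append]; exact HeadBeta.beta M V (Ms₀ ++ Ms) hV
  | right V Ms₀ hV hN =>
    rw [← appList_append, ← appList_append]; exact HeadBeta.right V (Ms₀ ++ Ms) hV hN

lemma hs_appList {A B : Term} (h : HeadSigma A B) (Ms : List Term) :
    HeadSigma (appList A Ms) (appList B Ms) := by
  cases h with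
  | sigma1 M N L Ms₀ =>
    rw [← appList_append, ← appList_append]; exact HeadSigma.sigma1 M N L (Ms₀ ++ Ms)
  | sigma3 V L N Ms₀ hV =>
    rw [← appList_append, ← appList_append]; exact HeadSigma.sigma3 V L N (Ms₀ ++ Ms) hV
  | right V Ms₀ hV hN =>
    rw [← appList_append, ← appList_append]; exact HeadSigma.right V (Ms₀ ++ Ms) hV hN

lemma headBeta_cases {S X : Term} (hb : HeadBeta S X) {h : Term} {as : List Term}
    (hh : notApp h) (hS : S = appList h as) :
    (∃ M V rest, h = lam M ∧ as = V :: rest ∧ isValue V ∧ X = appList (subst M 0 V) rest) ∨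
    (∃ N N' rest, isValue h ∧ as = N :: rest ∧ HeadBeta N N' ∧ X = appList (app h N') rest) := by
  cases hb with
  | beta M V Ms hV =>
    rw [← appList_cons] at hS
    obtain ⟨e1, e2⟩ := appList_inj (by trivial) hh hS
    exact Or.inl ⟨M, V, Ms, e1.symm, e2.symm, hV, rfl⟩
  | right V Ms hV hN =>
    rw [← appList_cons] at hS
    obtain ⟨e1, e2⟩ := appList_inj (notApp_of_isValue hV) hh hS
    subst e1
    exact Or.inr ⟨_, _, Ms, hV, e2.symm, hN, rfl⟩

end Term
namespace Term

lemma decomp (M : Term) : notApp (headOf M) ∧ M = appList (headOf M) (argsOf M) := by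
  induction M with
  | var n => exact ⟨trivial, rfl⟩
  | lam M _ => exact ⟨trivial, rfl⟩
  | app M N ih =>
    refine ⟨by simpa [headOf] using ih.1, ?_⟩
    show app M N = appList (headOf M) (argsOf M ++ [N])
    rw [appList_append, ← ih.2]
    rfl

lemma size_le_of_mem {a : Term} {as : List Term} (h : a ∈ as) :
    size a ≤ (as.map size).sum := by
  induction as with
  | nil => simp at h
  | cons b bs ih =>
    rcases List.mem_cons.1 h with rfl | h'
    · simp
    · simp only [List.map_cons, List.sum_cons]
      exact le_add_of_nonneg_of_le (Nat.zero_le _) (ih h')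

lemma f2_map_mem {R S : Term → Term → Prop} {f g : Term → Term} :
    ∀ {l l' : List Term}, List.Forall₂ R l l' →
      (∀ a b, a ∈ l → R a b → S (f a) (g b)) → List.Forall₂ S (l.map f) (l'.map g) := by
  intro l l' hl
  induction hl with
  | nil => intro _; exact List.Forall₂.nil
  | cons h₀ _ ih =>
    intro hmem
    exact List.Forall₂.cons (hmem _ _ List.mem_cons_self h₀)
      (ih fun a b ha => hmem a b (List.mem_cons_of_mem _ ha))

lemma par_lift_aux : ∀ n, ∀ M N : Term, size M ≤ n → Par M N →
    ∀ d, Par (lift d M) (lift d N) := by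
  intro n
  induction n with
  | zero => intro M N hsz; exact absurd hsz (by have := size_pos M; omega)
  | succ n ih =>
    intro M N hsz hp d
    obtain ⟨hna, hdec⟩ := decomp M
    have hsz' := size_appList (headOf M) (argsOf M)
    rw [← hdec] at hsz'
    rcases par_cases hp hna hdec with
      ⟨x, as', e, hl, hT⟩ |
      ⟨M₀, M₀', as', e, hM, hl, hT⟩ |
      ⟨M₀, M₀', V, V', rest, rest', e, ea, hV, hV', hM, hVp, hl, hT⟩ |
      ⟨M₀, M₀', N₀, N₀', L, L', rest, rest', e, ea, hM, hN, hL, hl, hT⟩ |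
      ⟨V', L, L', N₀, N₀', rest, rest', hV, hV', hVp, ea, hL, hN, hl, hT⟩
    · subst hT
      rw [hdec, e, lift_appList, lift_appList]
      refine par_appList (par_refl _) (f2_map_mem hl ?_)
      intro a b ha hab
      refine ih a b ?_ hab d
      have := size_le_of_mem ha
      rw [e] at hsz'
      simp [size] at hsz'
      omega
    · subst hT
      rw [hdec, e, lift_appList, lift_appList]
      have hM' : Par (lift d (lam M₀)) (lift d (lam M₀')) := by
        simp only [lift]
        have : size M₀ ≤ n := by rw [e] at hsz'; simp [size] at hsz'; omega
        exact Par.lam (ih _ _ this hM (d+1)) List.Forall₂.nil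
      refine par_appList hM' (f2_map_mem hl ?_)
      intro a b ha hab
      refine ih a b ?_ hab d
      have := size_le_of_mem ha
      rw [e] at hsz'; simp [size] at hsz'; omega
    · subst hT
      rw [e, ea] at hdec hsz'
      rw [hdec]
      have hszM₀ : size M₀ ≤ n := by simp [size] at hsz'; omega
      have hszV : size V ≤ n := by simp [size] at hsz'; omega
      have hrest : ∀ a ∈ rest, size a ≤ n := by
        intro a ha
        have := size_le_of_mem ha
        simp [size] at hsz'; omega
      rw [show appList (lam M₀) (V :: rest) = appList (app (lam M₀) V) rest from rfl]
      rw [lift_appList, lift_appList]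
      rw [lift_subst_le M₀' d 0 V' (Nat.zero_le d)]
      simp only [lift]
      exact Par.beta (isValue_lift hV d) (isValue_lift hV' d)
        (ih _ _ hszM₀ hM (d+1)) (ih _ _ hszV hVp d)
        (f2_map_mem hl fun a b ha hab => ih a b (hrest a ha) hab d)
    · subst hT
      rw [e, ea] at hdec hsz'
      rw [hdec]
      have hszM₀ : size M₀ ≤ n := by simp [size] at hsz'; omega
      have hszN : size N₀ ≤ n := by simp [size] at hsz'; omega
      have hszL : size L ≤ n := by simp [size] at hsz'; omega
      have hrest : ∀ a ∈ rest, size a ≤ n := by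
        intro a ha; have := size_le_of_mem ha; simp [size] at hsz'; omega
      rw [show appList (lam M₀) (N₀ :: L :: rest) =
          appList (app (app (lam M₀) N₀) L) rest from rfl]
      rw [lift_appList, lift_appList]
      simp only [lift]
      rw [← lift_lift L' 0 d (Nat.zero_le d)]
      exact Par.sigma1 (ih _ _ hszM₀ hM (d+1)) (ih _ _ hszN hN d) (ih _ _ hszL hL d)
        (f2_map_mem hl fun a b ha hab => ih a b (hrest a ha) hab d)
    · subst hT
      rw [ea] at hdec hsz'
      rw [hdec]
      have hszV : size (headOf M) ≤ n := by simp [size] at hsz' ⊢; omega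
      have hszN : size N₀ ≤ n := by simp [size] at hsz'; omega
      have hszL : size L ≤ n := by simp [size] at hsz'; omega
      have hrest : ∀ a ∈ rest, size a ≤ n := by
        intro a ha; have := size_le_of_mem ha; simp [size] at hsz'; omega
      rw [show appList (headOf M) (app (lam L) N₀ :: rest) =
          appList (app (headOf M) (app (lam L) N₀)) rest from rfl]
      rw [lift_appList, lift_appList]
      simp only [lift]
      rw [← lift_lift V' 0 d (Nat.zero_le d)]
      exact Par.sigma3 (isValue_lift hV d) (isValue_lift hV' d)
        (ih _ _ hszV hVp d) (ih _ _ hszL hL (d+1)) (ih _ _ hszN hN d)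
        (f2_map_mem hl fun a b ha hab => ih a b (hrest a ha) hab d)

lemma par_lift {M N : Term} (h : Par M N) (d : ℕ) : Par (lift d M) (lift d N) :=
  par_lift_aux (size M) M N le_rfl h d

lemma par_subst_aux : ∀ n, ∀ M M' W W' : Term, size M ≤ n → Par M M' →
    isValue W → isValue W' → Par W W' →
    ∀ k, Par (subst M k W) (subst M' k W') := by
  intro n
  induction n with
  | zero => intro M _ _ _ hsz; exact absurd hsz (by have := size_pos M; omega)
  | succ n ih =>
    intro M M' W W' hsz hp hW hW' hWW' k
    obtain ⟨hna, hdec⟩ := decomp M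
    have hsz' := size_appList (headOf M) (argsOf M)
    rw [← hdec] at hsz'
    rcases par_cases hp hna hdec with
      ⟨x, as', e, hl, hT⟩ |
      ⟨M₀, M₀', as', e, hM, hl, hT⟩ |
      ⟨M₀, M₀', V, V', rest, rest', e, ea, hV, hV', hM, hVp, hl, hT⟩ |
      ⟨M₀, M₀', N₀, N₀', L, L', rest, rest', e, ea, hM, hN, hL, hl, hT⟩ |
      ⟨V', L, L', N₀, N₀', rest, rest', hV, hV', hVp, ea, hL, hN, hl, hT⟩
    · subst hT
      rw [hdec, e, subst_appList, subst_appList]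
      have hhead : Par (subst (var x) k W) (subst (var x) k W') := by
        simp only [subst]; split_ifs <;> first | exact hWW' | exact par_refl _
      refine par_appList hhead (f2_map_mem hl ?_)
      intro a b ha hab
      refine ih a b _ _ ?_ hab hW hW' hWW' k
      have := size_le_of_mem ha
      rw [e] at hsz'; simp [size] at hsz'; omega
    · subst hT
      rw [hdec, e, subst_appList, subst_appList]
      have hhead : Par (subst (lam M₀) k W) (subst (lam M₀') k W') := by
        simp only [subst]
        have : size M₀ ≤ n := by rw [e] at hsz'; simp [size] at hsz'; omega
        exact Par.lam (ih _ _ _ _ this hM (isValue_lift hW 0) (isValue_lift hW' 0)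
          (par_lift hWW' 0) (k+1)) List.Forall₂.nil
      refine par_appList hhead (f2_map_mem hl ?_)
      intro a b ha hab
      refine ih a b _ _ ?_ hab hW hW' hWW' k
      have := size_le_of_mem ha
      rw [e] at hsz'; simp [size] at hsz'; omega
    · subst hT
      rw [e, ea] at hdec hsz'
      rw [hdec]
      have hszM₀ : size M₀ ≤ n := by simp [size] at hsz'; omega
      have hszV : size V ≤ n := by simp [size] at hsz'; omega
      have hrest : ∀ a ∈ rest, size a ≤ n := by
        intro a ha; have := size_le_of_mem ha; simp [size] at hsz'; omega
      rw [show appList (lam M₀) (V :: rest) = appList (app (lam M₀) V) rest from rfl]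
      rw [subst_appList, subst_appList]
      rw [subst_subst M₀' 0 k V' W' (Nat.zero_le k)]
      simp only [subst]
      exact Par.beta (isValue_subst hV hW k) (isValue_subst hV' hW' k)
        (ih _ _ _ _ hszM₀ hM (isValue_lift hW 0) (isValue_lift hW' 0) (par_lift hWW' 0) (k+1))
        (ih _ _ _ _ hszV hVp hW hW' hWW' k)
        (f2_map_mem hl fun a b ha hab => ih a b _ _ (hrest a ha) hab hW hW' hWW' k)
    · subst hT
      rw [e, ea] at hdec hsz'
      rw [hdec]
      have hszM₀ : size M₀ ≤ n := by simp [size] at hsz'; omega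
      have hszN : size N₀ ≤ n := by simp [size] at hsz'; omega
      have hszL : size L ≤ n := by simp [size] at hsz'; omega
      have hrest : ∀ a ∈ rest, size a ≤ n := by
        intro a ha; have := size_le_of_mem ha; simp [size] at hsz'; omega
      rw [show appList (lam M₀) (N₀ :: L :: rest) =
          appList (app (app (lam M₀) N₀) L) rest from rfl]
      rw [subst_appList, subst_appList]
      simp only [subst]
      rw [← lift_subst_ge L' 0 k W' (Nat.zero_le k)]
      exact Par.sigma1
        (ih _ _ _ _ hszM₀ hM (isValue_lift hW 0) (isValue_lift hW' 0) (par_lift hWW' 0) (k+1))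
        (ih _ _ _ _ hszN hN hW hW' hWW' k)
        (ih _ _ _ _ hszL hL hW hW' hWW' k)
        (f2_map_mem hl fun a b ha hab => ih a b _ _ (hrest a ha) hab hW hW' hWW' k)
    · subst hT
      rw [ea] at hdec hsz'
      rw [hdec]
      have hszV : size (headOf M) ≤ n := by simp [size] at hsz' ⊢; omega
      have hszN : size N₀ ≤ n := by simp [size] at hsz'; omega
      have hszL : size L ≤ n := by simp [size] at hsz'; omega
      have hrest : ∀ a ∈ rest, size a ≤ n := by
        intro a ha; have := size_le_of_mem ha; simp [size] at hsz'; omega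
      rw [show appList (headOf M) (app (lam L) N₀ :: rest) =
          appList (app (headOf M) (app (lam L) N₀)) rest from rfl]
      rw [subst_appList, subst_appList]
      simp only [subst]
      rw [← lift_subst_ge V' 0 k W' (Nat.zero_le k)]
      exact Par.sigma3 (isValue_subst hV hW k) (isValue_subst hV' hW' k)
        (ih _ _ _ _ hszV hVp hW hW' hWW' k)
        (ih _ _ _ _ hszL hL (isValue_lift hW 0) (isValue_lift hW' 0) (par_lift hWW' 0) (k+1))
        (ih _ _ _ _ hszN hN hW hW' hWW' k)
        (f2_map_mem hl fun a b ha hab => ih a b _ _ (hrest a ha) hab hW hW' hWW' k)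

lemma par_subst {M M' W W' : Term} (hp : Par M M') (hW : isValue W) (hW' : isValue W')
    (hWW' : Par W W') (k : ℕ) : Par (subst M k W) (subst M' k W') :=
  par_subst_aux (size M) M M' W W' le_rfl hp hW hW' hWW' k

lemma ipar_subst {P P' : Term} (h : IPar P P') {W W' : Term} (hW : isValue W)
    (hW' : isValue W') (hWW' : Par W W') : ∀ k, IPar (subst P k W) (subst P' k W') := by
  induction h with
  | lam hN =>
    intro k
    exact IPar.lam (par_subst hN (isValue_lift hW 0) (isValue_lift hW' 0) (par_lift hWW' 0) (k+1))
  | var x =>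
    intro k
    simp only [subst]
    split_ifs
    · exact par_value_ipar hW hWW'
    · exact IPar.var _
    · exact IPar.var _
  | right hV hV' hVp hN hMs ihN =>
    intro k
    rw [subst_appList, subst_appList]
    simp only [subst]
    exact IPar.right (isValue_subst hV hW k) (isValue_subst hV' hW' k)
      (par_subst hVp hW hW' hWW' k) (ihN k)
      (f2_map_mem hMs fun a b _ hab => par_subst hab hW hW' hWW' k)

lemma hb_subst {A B : Term} (h : HeadBeta A B) {W : Term} (hW : isValue W) :
    ∀ k, HeadBeta (subst A k W) (subst B k W) := by
  induction h with
  | beta M V Ms hV =>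
    intro k
    rw [subst_appList, subst_appList]
    simp only [subst]
    rw [subst_subst M 0 k V W (Nat.zero_le k)]
    exact HeadBeta.beta _ _ _ (isValue_subst hV hW k)
  | right V Ms hV hN ih =>
    intro k
    rw [subst_appList, subst_appList]
    simp only [subst]
    exact HeadBeta.right _ _ (isValue_subst hV hW k) (ih k)

lemma hs_subst {A B : Term} (h : HeadSigma A B) {W : Term} (hW : isValue W) :
    ∀ k, HeadSigma (subst A k W) (subst B k W) := by
  induction h with
  | sigma1 M N L Ms =>
    intro k
    rw [subst_appList, subst_appList]
    simp only [subst]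
    rw [← lift_subst_ge L 0 k W (Nat.zero_le k)]
    exact HeadSigma.sigma1 _ _ _ _
  | sigma3 V L N Ms hV =>
    intro k
    rw [subst_appList, subst_appList]
    simp only [subst]
    rw [← lift_subst_ge V 0 k W (Nat.zero_le k)]
    exact HeadSigma.sigma3 _ _ _ _ (isValue_subst hV hW k)
  | right V Ms hV hN ih =>
    intro k
    rw [subst_appList, subst_appList]
    simp only [subst]
    exact HeadSigma.right _ _ (isValue_subst hV hW k) (ih k)

end Term
namespace Term

open Relation

/-! ### HeadRed lifting -/

lemma hr_appList {A B : Term} (h : HeadRed A B) (Ms : List Term) :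
    HeadRed (appList A Ms) (appList B Ms) := by
  rcases h with h | h
  · exact Or.inl (hb_appList h Ms)
  · exact Or.inr (hs_appList h Ms)

lemma hr_star_appList {A B : Term} (h : ReflTransGen HeadRed A B) (Ms : List Term) :
    ReflTransGen HeadRed (appList A Ms) (appList B Ms) :=
  ReflTransGen.lift (fun X => appList X Ms) (fun _ _ hab => hr_appList hab Ms) _ _ h

lemma hr_arg {A B V : Term} (hV : isValue V) (h : HeadRed A B) (Ms : List Term) :
    HeadRed (appList (app V A) Ms) (appList (app V B) Ms) := by
  rcases h with h | h
  · exact Or.inl (HeadBeta.right V Ms hV h)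
  · exact Or.inr (HeadSigma.right V Ms hV h)

lemma hr_star_arg {A B V : Term} (hV : isValue V) (h : ReflTransGen HeadRed A B)
    (Ms : List Term) :
    ReflTransGen HeadRed (appList (app V A) Ms) (appList (app V B) Ms) :=
  ReflTransGen.lift (fun X => appList (app V X) Ms) (fun _ _ hab => hr_arg hV hab Ms) _ _ h

lemma hb_star_arg {A B V : Term} (hV : isValue V) (h : ReflTransGen HeadBeta A B)
    (Ms : List Term) :
    ReflTransGen HeadBeta (appList (app V A) Ms) (appList (app V B) Ms) :=
  ReflTransGen.lift (fun X => appList (app V X) Ms)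
    (fun _ _ hab => HeadBeta.right V Ms hV hab) _ _ h

/-! ### Strong parallel reduction -/

def SPar (M N : Term) : Prop :=
  Par M N ∧ ∃ P, ReflTransGen HeadRed M P ∧ IPar P N

lemma f2_mem_imp {R S : Term → Term → Prop} :
    ∀ {l l' : List Term}, List.Forall₂ R l l' →
      (∀ a b, a ∈ l → R a b → S a b) → List.Forall₂ S l l' := by
  intro l l' hl
  induction hl with
  | nil => intro _; exact List.Forall₂.nil
  | cons h₀ _ ih =>
    intro hmem
    exact List.Forall₂.cons (hmem _ _ List.mem_cons_self h₀)
      (ih fun a b ha => hmem a b (List.mem_cons_of_mem _ ha))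

lemma spar_ext {P P' : Term} (hP : SPar P P') :
    ∀ {Ms Ms' : List Term}, List.Forall₂ SPar Ms Ms' →
      SPar (appList P Ms) (appList P' Ms') := by
  intro Ms Ms' hl
  refine ⟨par_appList hP.1 (f2_imp (fun _ _ h => h.1) hl), ?_⟩
  obtain ⟨P₀, hstar, hip⟩ := hP.2
  cases hl with
  | nil => exact ⟨P₀, hstar, hip⟩
  | cons hA has =>
    rename_i A A' as as'
    have step1 : ReflTransGen HeadRed (appList P (A :: as)) (appList P₀ (A :: as)) :=
      ReflTransGen.lift (fun X => appList X (A :: as))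
        (fun _ _ hab => hr_appList hab _) _ _ hstar
    cases hip with
    | lam hB =>
      rename_i B B'
      obtain ⟨A₀, hstarA, hipA⟩ := hA.2
      refine ⟨appList (app (lam B) A₀) as, ?_, ?_⟩
      · exact step1.trans (hr_star_arg (isValue_lam B) hstarA as)
      · exact IPar.right (isValue_lam B) (isValue_lam B') (Par.lam hB List.Forall₂.nil) hipA
          (f2_imp (fun _ _ h => h.1) has)
    | var x =>
      obtain ⟨A₀, hstarA, hipA⟩ := hA.2
      refine ⟨appList (app (var x) A₀) as, ?_, ?_⟩
      · exact step1.trans (hr_star_arg (isValue_var x) hstarA as)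
      · exact IPar.right (isValue_var x) (isValue_var x) (par_refl (var x)) hipA
          (f2_imp (fun _ _ h => h.1) has)
    | right hV hV' hVp hN hMs =>
      rename_i V V' N N' Ns Ns'
      refine ⟨appList (app V N) (Ns ++ A :: as), ?_, ?_⟩
      · rw [appList_append]; exact step1
      · rw [← appList_append]
        exact IPar.right hV hV' hVp hN
          (f2_append hMs (List.Forall₂.cons hA.1 (f2_imp (fun _ _ h => h.1) has)))

lemma spar_subst {M M' V V' : Term} (h : SPar M M') (hV : isValue V) (hV' : isValue V')
    (hVp : Par V V') : SPar (subst M 0 V) (subst M' 0 V') := by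
  obtain ⟨P, hstar, hip⟩ := h.2
  refine ⟨par_subst h.1 hV hV' hVp 0, subst P 0 V, ?_, ipar_subst hip hV hV' hVp 0⟩
  refine ReflTransGen.lift (fun X => subst X 0 V) (fun a b hab => ?_) _ _ hstar
  rcases hab with hab | hab
  · exact Or.inl (hb_subst hab hV 0)
  · exact Or.inr (hs_subst hab hV 0)

/-! ### Sequentialization : Par ⊆ head* ; IPar -/

lemma par_spar_aux : ∀ n, ∀ M N : Term, size M ≤ n → Par M N → SPar M N := by
  intro n
  induction n with
  | zero => intro M _ hsz; exact absurd hsz (by have := size_pos M; omega)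
  | succ n ih =>
    intro M N hsz hp
    obtain ⟨hna, hdec⟩ := decomp M
    have hsz' := size_appList (headOf M) (argsOf M)
    rw [← hdec] at hsz'
    rcases par_cases hp hna hdec with
      ⟨x, as', e, hl, hT⟩ |
      ⟨M₀, M₀', as', e, hM, hl, hT⟩ |
      ⟨M₀, M₀', V, V', rest, rest', e, ea, hV, hV', hM, hVp, hl, hT⟩ |
      ⟨M₀, M₀', N₀, N₀', L, L', rest, rest', e, ea, hM, hN, hL, hl, hT⟩ |
      ⟨V', L, L', N₀, N₀', rest, rest', hV, hV', hVp, ea, hL, hN, hl, hT⟩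
    · subst hT
      rw [hdec, e]
      rw [e] at hsz'
      refine spar_ext ⟨par_refl _, var x, ReflTransGen.refl, IPar.var x⟩
        (f2_mem_imp hl ?_)
      intro a b ha hab
      refine ih a b ?_ hab
      have := size_le_of_mem ha
      simp [size] at hsz'; omega
    · subst hT
      rw [hdec, e]
      rw [e] at hsz'
      refine spar_ext ⟨Par.lam hM List.Forall₂.nil, lam M₀, ReflTransGen.refl, IPar.lam hM⟩
        (f2_mem_imp hl ?_)
      intro a b ha hab
      refine ih a b ?_ hab
      have := size_le_of_mem ha
      simp [size] at hsz'; omega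
    · subst hT
      rw [e, ea] at hdec hsz'
      rw [hdec]
      have hszM₀ : size M₀ ≤ n := by simp [size] at hsz'; omega
      have hszV : size V ≤ n := by simp [size] at hsz'; omega
      have hrest : ∀ a ∈ rest, size a ≤ n := by
        intro a ha; have := size_le_of_mem ha; simp [size] at hsz'; omega
      have hhead : SPar (app (lam M₀) V) (subst M₀' 0 V') := by
        refine ⟨Par.beta hV hV' hM hVp List.Forall₂.nil, ?_⟩
        have hsub := spar_subst (ih _ _ hszM₀ hM) hV hV' hVp
        obtain ⟨Q, hstarQ, hipQ⟩ := hsub.2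
        refine ⟨Q, ?_, hipQ⟩
        exact ReflTransGen.head (Or.inl (HeadBeta.beta M₀ V [] hV)) hstarQ
      exact spar_ext hhead (f2_mem_imp hl fun a b ha hab => ih a b (hrest a ha) hab)
    · subst hT
      rw [e, ea] at hdec hsz'
      rw [hdec]
      have hszN : size N₀ ≤ n := by simp [size] at hsz'; omega
      have hrest : ∀ a ∈ rest, size a ≤ n := by
        intro a ha; have := size_le_of_mem ha; simp [size] at hsz'; omega
      have hhead : SPar (app (app (lam M₀) N₀) L) (app (lam (app M₀' (lift 0 L'))) N₀') := by
        refine ⟨Par.sigma1 hM hN hL List.Forall₂.nil, ?_⟩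
        obtain ⟨N₁, hstarN, hipN⟩ := (ih _ _ hszN hN).2
        refine ⟨app (lam (app M₀ (lift 0 L))) N₁, ?_, ?_⟩
        · refine ReflTransGen.head (Or.inr (HeadSigma.sigma1 M₀ N₀ L [])) ?_
          exact hr_star_arg (isValue_lam _) hstarN []
        · exact IPar.right (isValue_lam _) (isValue_lam _)
            (Par.lam (par_app hM (par_lift hL 0)) List.Forall₂.nil) hipN List.Forall₂.nil
      exact spar_ext hhead (f2_mem_imp hl fun a b ha hab => ih a b (hrest a ha) hab)
    · subst hT
      rw [ea] at hdec hsz'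
      rw [hdec]
      have hszN : size N₀ ≤ n := by simp [size] at hsz'; omega
      have hrest : ∀ a ∈ rest, size a ≤ n := by
        intro a ha; have := size_le_of_mem ha; simp [size] at hsz'; omega
      have hhead : SPar (app (headOf M) (app (lam L) N₀))
          (app (lam (app (lift 0 V') L')) N₀') := by
        refine ⟨Par.sigma3 hV hV' hVp hL hN List.Forall₂.nil, ?_⟩
        obtain ⟨N₁, hstarN, hipN⟩ := (ih _ _ hszN hN).2
        refine ⟨app (lam (app (lift 0 (headOf M)) L)) N₁, ?_, ?_⟩
        · refine ReflTransGen.head (Or.inr (HeadSigma.sigma3 (headOf M) L N₀ [] hV)) ?_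
          exact hr_star_arg (isValue_lam _) hstarN []
        · exact IPar.right (isValue_lam _) (isValue_lam _)
            (Par.lam (par_app (par_lift hVp 0) hL) List.Forall₂.nil) hipN List.Forall₂.nil
      exact spar_ext hhead (f2_mem_imp hl fun a b ha hab => ih a b (hrest a ha) hab)

lemma par_spar {M N : Term} (h : Par M N) : SPar M N :=
  par_spar_aux (size M) M N le_rfl h

/-! ### Backward simulation of head β through IPar -/

lemma ipar_hb_sim {P N : Term} (h : IPar P N) :
    ∀ N', HeadBeta N N' → ∃ P', HeadBeta P P' ∧ Par P' N' := by
  induction h with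
  | lam _ => intro N' hb; exact absurd trivial (hb_src_not_value hb)
  | var _ => intro N' hb; exact absurd trivial (hb_src_not_value hb)
  | right hV hV' hVp hA hMs ih =>
    rename_i V V' A A' Ms Ms'
    intro N' hb
    rcases headBeta_cases hb (h := V') (as := A' :: Ms') (notApp_of_isValue hV') rfl with
      ⟨B', W, rest, eV, econs, hWval, hN'⟩ | ⟨N₁, N₁', rest, _, econs, hbN, hN'⟩
    · cases econs
      subst eV
      obtain ⟨B, rfl, hB⟩ : ∃ B, V = lam B ∧ Par B B' := by
        cases V with
        | var x => exact absurd (par_var_inv hVp) (by simp)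
        | lam B =>
          obtain ⟨B₂, e, hB⟩ := par_lam_inv hVp
          exact ⟨B, rfl, by cases e; exact hB⟩
        | app => simp at hV
      have hAval : isValue A := ipar_value_rev hA hWval
      refine ⟨appList (subst B 0 A) Ms, HeadBeta.beta B A Ms hAval, ?_⟩
      subst hN'
      exact par_appList (par_subst hB hAval hWval (ipar_to_par hA) 0) hMs
    · cases econs
      obtain ⟨A₂, hbA₂, hpA₂⟩ := ih N₁' hbN
      refine ⟨appList (app V A₂) Ms, HeadBeta.right V Ms hV hbA₂, ?_⟩
      subst hN'
      exact par_appList (par_app hVp hpA₂) hMs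

/-! ### Commutation of head σ and head β -/

lemma hs_hb_comm {M M₁ : Term} (h : HeadSigma M M₁) :
    ∀ M₂, HeadBeta M₁ M₂ → ∃ M₁', HeadBeta M M₁' ∧ (M₁' = M₂ ∨ HeadSigma M₁' M₂) := by
  induction h with
  | sigma1 M₀ N L Ms =>
    intro M₂ hb
    rcases headBeta_cases hb (h := lam (app M₀ (lift 0 L))) (as := N :: Ms) trivial rfl with
      ⟨B, W, rest, eV, econs, hWval, hM₂⟩ | ⟨N₁, N₁', rest, _, econs, hbN, hM₂⟩
    · cases econs
      cases lam.inj eV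
      refine ⟨appList (subst M₀ 0 N) (L :: Ms), HeadBeta.beta M₀ N (L :: Ms) hWval, Or.inl ?_⟩
      subst hM₂
      simp [subst, subst_lift]
    · cases econs
      refine ⟨appList (app (lam M₀) N₁') (L :: Ms),
        HeadBeta.right (lam M₀) (L :: Ms) trivial hbN, Or.inr ?_⟩
      subst hM₂
      exact HeadSigma.sigma1 M₀ N₁' L Ms
  | sigma3 V L N Ms hV =>
    intro M₂ hb
    rcases headBeta_cases hb (h := lam (app (lift 0 V) L)) (as := N :: Ms) trivial rfl with
      ⟨B, W, rest, eV, econs, hWval, hM₂⟩ | ⟨N₁, N₁', rest, _, econs, hbN, hM₂⟩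
    · cases econs
      cases lam.inj eV
      refine ⟨appList (app V (subst L 0 N)) Ms,
        HeadBeta.right V Ms hV (HeadBeta.beta L N [] hWval), Or.inl ?_⟩
      subst hM₂
      simp [subst, subst_lift]
    · cases econs
      refine ⟨appList (app V (app (lam L) N₁')) Ms,
        HeadBeta.right V Ms hV (HeadBeta.right (lam L) [] trivial hbN), Or.inr ?_⟩
      subst hM₂
      exact HeadSigma.sigma3 V L N₁' Ms hV
  | right V Ms hV hsN ih =>
    rename_i N N'
    intro M₂ hb
    rcases headBeta_cases hb (h := V) (as := N' :: Ms) (notApp_of_isValue hV) rfl with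
      ⟨B, W, rest, eV, econs, hWval, hM₂⟩ | ⟨N₁, N₁', rest, _, econs, hbN, hM₂⟩
    · cases econs
      exact absurd hWval (hs_tgt_not_value hsN)
    · cases econs
      obtain ⟨N₂, hbN₂, hdisj⟩ := ih N₁' hbN
      refine ⟨appList (app V N₂) Ms, HeadBeta.right V Ms hV hbN₂, ?_⟩
      subst hM₂
      rcases hdisj with rfl | hσ
      · exact Or.inl rfl
      · exact Or.inr (HeadSigma.right V Ms hV hσ)

/-! ### head σ steps preserve halting (backward) -/

lemma halts_of_value {V : Term} (h : isValue V) : Halts V := ⟨V, h, ReflTransGen.refl⟩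

lemma halts_head {M M' : Term} (h : HeadBeta M M') (hh : Halts M') : Halts M := by
  obtain ⟨V, hV, hstar⟩ := hh
  exact ⟨V, hV, ReflTransGen.head h hstar⟩

lemma sigma_halts_aux {Vf : Term} (hVf : isValue Vf) :
    ∀ {X : Term}, ReflTransGen HeadBeta X Vf → ∀ M, HeadSigma M X → Halts M := by
  intro X hstar
  induction hstar using ReflTransGen.head_induction_on with
  | refl => intro M hσ; exact absurd hVf (hs_tgt_not_value hσ)
  | head hb hrest ih =>
    intro M hσ
    obtain ⟨M₁', hbM, hdisj⟩ := hs_hb_comm hσ _ hb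
    rcases hdisj with rfl | hσ'
    · exact halts_head hbM ⟨Vf, hVf, hrest⟩
    · exact halts_head hbM (ih _ hσ')

lemma sigma_halts {M M₁ : Term} (hσ : HeadSigma M M₁) (h : Halts M₁) : Halts M := by
  obtain ⟨Vf, hVf, hstar⟩ := h
  exact sigma_halts_aux hVf hstar M hσ

lemma hr_star_halts {M P : Term} (h : ReflTransGen HeadRed M P) (hh : Halts P) : Halts M := by
  induction h using ReflTransGen.head_induction_on with
  | refl => exact hh
  | head hstep _ ih =>
    rcases hstep with hstep | hstep
    · exact halts_head hstep ih
    · exact sigma_halts hstep ih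

/-! ### Backward halting preservation -/

lemma par_halts_rev_aux {Vf : Term} (hVf : isValue Vf) :
    ∀ {N : Term}, ReflTransGen HeadBeta N Vf → ∀ M, Par M N → Halts M := by
  intro N hstar
  induction hstar using ReflTransGen.head_induction_on with
  | refl =>
    intro M hp
    obtain ⟨_, P, hstarP, hipP⟩ := par_spar hp
    exact hr_star_halts hstarP (halts_of_value (ipar_value_rev hipP hVf))
  | head hb hrest ih =>
    intro M hp
    obtain ⟨_, P, hstarP, hipP⟩ := par_spar hp
    obtain ⟨P₁, hbP, hpP₁⟩ := ipar_hb_sim hipP _ hb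
    exact hr_star_halts hstarP (halts_head hbP (ih _ hpP₁))

lemma par_halts_rev {M N : Term} (hp : Par M N) (h : Halts N) : Halts M := by
  obtain ⟨Vf, hVf, hstar⟩ := h
  exact par_halts_rev_aux hVf hstar M hp

end Term
namespace Term

open Relation

/-! ### Forward simulation of head β through Par -/

lemma hb_par_sim_aux : ∀ n, ∀ M M₁ N : Term, size M ≤ n → HeadBeta M M₁ → Par M N →
    ∃ N₁, ReflTransGen HeadRed N N₁ ∧ Par M₁ N₁ := by
  intro n
  induction n with
  | zero => intro M _ _ hsz; exact absurd hsz (by have := size_pos M; omega)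
  | succ n ih =>
    intro M M₁ N hsz hb hp
    cases hb with
    | beta M₀ W Ms hW =>
      rcases par_cases hp (h := lam M₀) (as := W :: Ms) trivial rfl with
        ⟨x, as', e, hl, hT⟩ |
        ⟨B, B', as', e, hB, hl, hT⟩ |
        ⟨B, B', V, V', rest, rest', e, ea, hV, hV', hBp, hVp, hl, hT⟩ |
        ⟨B, B', N₀, N₀', L, L', rest, rest', e, ea, hBp, hN, hL, hl, hT⟩ |
        ⟨V', L, L', N₀, N₀', rest, rest', hV, hV', hVp, ea, hL, hN, hl, hT⟩
      · exact absurd e (by simp)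
      · cases lam.inj e
        cases hl with
        | cons hpW hMs =>
          rename_i W' Ms'
          have hW' : isValue W' := par_value hW hpW
          refine ⟨appList (subst B' 0 W') Ms', ?_, ?_⟩
          · subst hT
            exact ReflTransGen.single (Or.inl (HeadBeta.beta B' W' Ms' hW'))
          · exact par_appList (par_subst hB hW hW' hpW 0) hMs
      · cases lam.inj e
        cases ea
        subst hT
        exact ⟨_, ReflTransGen.refl, par_appList (par_subst hBp hW hV' hVp 0) hl⟩
      · cases lam.inj e
        cases ea
        subst hT
        have hN₀' : isValue N₀' := par_value hW hN
        refine ⟨appList (app (subst B' 0 N₀') L') rest', ?_, ?_⟩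
        · have estep : HeadBeta (appList (app (lam (app B' (lift 0 L'))) N₀') rest')
              (appList (subst (app B' (lift 0 L')) 0 N₀') rest') :=
            HeadBeta.beta _ N₀' rest' hN₀'
          have : subst (app B' (lift 0 L')) 0 N₀' = app (subst B' 0 N₀') L' := by
            simp [subst, subst_lift]
          rw [this] at estep
          exact ReflTransGen.single (Or.inl estep)
        · exact par_appList (par_app (par_subst hBp hW hN₀' hN 0) hL) hl
      · cases ea
        simp at hW
    | right V Ms hV hbA =>
      rename_i A A₂
      have hsz' := size_appList (app V A) Ms
      have hszA : size A ≤ n := by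
        rw [hsz'] at hsz; simp [size] at hsz; have := size_pos V; omega
      rcases par_cases hp (h := V) (as := A :: Ms) (notApp_of_isValue hV) rfl with
        ⟨x, as', e, hl, hT⟩ |
        ⟨B, B', as', e, hB, hl, hT⟩ |
        ⟨B, B', V₀, V₀', rest, rest', e, ea, hV₀, hV₀', hBp, hVp, hl, hT⟩ |
        ⟨B, B', N₀, N₀', L, L', rest, rest', e, ea, hBp, hN, hL, hl, hT⟩ |
        ⟨V', L, L', N₀, N₀', rest, rest', hVv, hV', hVp, ea, hL, hN, hl, hT⟩
      · cases hl with
        | cons hpA hMs =>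
          rename_i A' Ms'
          obtain ⟨A₃, starA, parA⟩ := ih A A₂ A' hszA hbA hpA
          subst hT; subst e
          refine ⟨appList (app (var x) A₃) Ms', hr_star_arg (isValue_var x) starA Ms', ?_⟩
          exact par_appList (par_app (par_refl _) parA) hMs
      · cases hl with
        | cons hpA hMs =>
          rename_i A' Ms'
          obtain ⟨A₃, starA, parA⟩ := ih A A₂ A' hszA hbA hpA
          subst hT; subst e
          refine ⟨appList (app (lam B') A₃) Ms', hr_star_arg (isValue_lam B') starA Ms', ?_⟩
          exact par_appList (par_app (Par.lam hB List.Forall₂.nil) parA) hMs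
      · cases ea
        exact absurd hV₀ (hb_src_not_value hbA)
      · cases ea
        subst hT; subst e
        obtain ⟨N₃, starN, parA⟩ := ih A A₂ N₀' hszA hbA hN
        refine ⟨appList (app (lam (app B' (lift 0 L'))) N₃) rest',
          hr_star_arg (isValue_lam _) starN rest', ?_⟩
        exact Par.sigma1 hBp parA hL hl
      · cases ea
        rcases headBeta_cases hbA (h := lam L) (as := [N₀]) trivial rfl with
          ⟨B₀, W₀, rest₀, eV, econs, hW₀, hA₂⟩ | ⟨N₁₀, N₂, rest₀, _, econs, hbN₀, hA₂⟩
        · cases econs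
          cases lam.inj eV
          subst hT
          have hN₀' : isValue N₀' := par_value hW₀ hN
          refine ⟨appList (app V' (subst L' 0 N₀')) rest', ?_, ?_⟩
          · have estep : HeadBeta (appList (app (lam (app (lift 0 V') L')) N₀') rest')
                (appList (subst (app (lift 0 V') L') 0 N₀') rest') :=
              HeadBeta.beta _ N₀' rest' hN₀'
            have : subst (app (lift 0 V') L') 0 N₀' = app V' (subst L' 0 N₀') := by
              simp [subst, subst_lift]
            rw [this] at estep
            exact ReflTransGen.single (Or.inl estep)
          · subst hA₂
            exact par_appList (par_app hVp (par_subst hL hW₀ hN₀' hN 0)) hl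
        · cases econs
          subst hT
          have hszN₀ : size N₀ ≤ n := by
            rw [hsz'] at hsz; simp [size] at hsz; omega
          obtain ⟨N₃, starN, parN⟩ := ih N₀ N₂ N₀' hszN₀ hbN₀ hN
          refine ⟨appList (app (lam (app (lift 0 V') L')) N₃) rest',
            hr_star_arg (isValue_lam _) starN rest', ?_⟩
          subst hA₂
          exact Par.sigma3 hVv hV' hVp hL parN hl

lemma hb_par_sim {M M₁ N : Term} (hb : HeadBeta M M₁) (hp : Par M N) :
    ∃ N₁, ReflTransGen HeadRed N N₁ ∧ Par M₁ N₁ :=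
  hb_par_sim_aux (size M) M M₁ N le_rfl hb hp

/-! ### Forward halting preservation -/

lemma par_halts_fwd_aux {Vf : Term} (hVf : isValue Vf) :
    ∀ {M : Term}, ReflTransGen HeadBeta M Vf → ∀ N, Par M N → Halts N := by
  intro M hstar
  induction hstar using ReflTransGen.head_induction_on with
  | refl => intro N hp; exact halts_of_value (par_value hVf hp)
  | head hb hrest ih =>
    intro N hp
    obtain ⟨N₁, starN, parN⟩ := hb_par_sim hb hp
    exact hr_star_halts starN (ih _ parN)

lemma par_halts_fwd {M N : Term} (hp : Par M N) (h : Halts M) : Halts N := by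
  obtain ⟨Vf, hVf, hstar⟩ := h
  exact par_halts_fwd_aux hVf hstar N hp

/-! ### Assembly -/

lemma red_par {M N : Term} (h : Red M N) : Par M N := by
  induction h with
  | base hb =>
    cases hb with
    | beta M V hV => exact Par.beta hV hV (par_refl M) (par_refl V) List.Forall₂.nil
    | sigma1 M N L =>
      exact Par.sigma1 (par_refl M) (par_refl N) (par_refl L) List.Forall₂.nil
    | sigma3 V L N hV =>
      exact Par.sigma3 hV hV (par_refl V) (par_refl L) (par_refl N) List.Forall₂.nil
  | lam _ ih => exact Par.lam ih List.Forall₂.nil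
  | appL N _ ih => exact par_app ih (par_refl N)
  | appR M _ ih => exact par_app (par_refl M) ih

lemma red_halts_iff {M N : Term} (h : Red M N) : Halts M ↔ Halts N :=
  ⟨par_halts_fwd (red_par h), par_halts_rev (red_par h)⟩

lemma red_fill {M N : Term} (h : Red M N) : ∀ C : Ctx1, Red (fill C M) (fill C N) := by
  intro C
  induction C with
  | hole => exact h
  | lam C ih => exact Ctx.lam ih
  | appL C T ih => exact Ctx.appL T ih
  | appR T C ih => exact Ctx.appR T ih

end Term

open Term Relation in
theorem adequacy :
    (∀ M M2 : Term, ReflTransGen Red M M2 → (Halts M ↔ Halts M2)) ∧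
    (∀ M N : Term, Relation.EqvGen Red M N →
      ∀ C : Ctx1, Halts (fill C M) ↔ Halts (fill C N)) := by
  constructor
  · intro M M2 h
    induction h with
    | refl => exact Iff.rfl
    | tail _ hstep ih => exact ih.trans (red_halts_iff hstep)
  · intro M N h C
    induction h with
    | rel a b hab => exact red_halts_iff (red_fill hab C)
    | refl a => exact Iff.rfl
    | symm a b _ ih => exact ih.symm
    | trans a b c _ _ ih₁ ih₂ => exact ih₁.trans ih₂
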